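/- For every subset S ⊆ V with |S| ≥ 2, letting E(S) denote the set of edges of G with both endpoints in S, we have ⌈ |E(S)| / (|S|−1) ⌉ ≤ μ^{1/(s+1)}. In particular, the degeneracy-type quantity α(G) = max_{S ⊆ V, |S| ≥ 2} ⌈ |E(S)| / (|S|−1) ⌉ satisfies α(G) ≤ μ^{1/(s+1)}. -/

import Mathlib

open Finset

lemma deg_aux {V : Type*} [Fintype V] [DecidableEq V] (G : SimpleGraph V) [DecidableRel G.Adj]
    (S : Finset V) :
    2 * (G.edgeFinset.filter (fun e => ∀ v ∈ e, v ∈ S)).card ≤ ∑ v ∈ S, G.degree v ∧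
    (G.edgeFinset.filter (fun e => ∀ v ∈ e, v ∈ S)).card ≤ S.card.choose 2 := by
  classical
  set H : SimpleGraph {x // x ∈ S} := G.comap (fun x => (x : V)) with hH
  haveI : DecidableRel H.Adj := fun a b => ‹DecidableRel G.Adj› a b
  have hcardeq : H.edgeFinset.card = (G.edgeFinset.filter (fun e => ∀ v ∈ e, v ∈ S)).card := by
    apply Finset.card_bij (fun e _ => Sym2.map Subtype.val e)
    · intro e he
      induction e with
      | _ a b =>
        simp only [SimpleGraph.mem_edgeFinset, SimpleGraph.mem_edgeSet] at he
        simp only [Sym2.map_pair_eq, Finset.mem_filter, SimpleGraph.mem_edgeFinset,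
          SimpleGraph.mem_edgeSet, Sym2.mem_iff]
        exact ⟨he, by rintro v (rfl | rfl) <;> simp⟩
    · intro a _ b _ h
      exact Sym2.map.injective Subtype.val_injective h
    · intro e he
      induction e with
      | _ x y =>
        simp only [Finset.mem_filter, SimpleGraph.mem_edgeFinset, SimpleGraph.mem_edgeSet,
          Sym2.mem_iff] at he
        obtain ⟨hadj, hmem⟩ := he
        refine ⟨s(⟨x, hmem x (by simp)⟩, ⟨y, hmem y (by simp)⟩), ?_, ?_⟩
        · simpa [SimpleGraph.mem_edgeFinset, SimpleGraph.mem_edgeSet, hH] using hadj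
        · simp
  have hdeg : ∀ a : {x // x ∈ S}, H.degree a ≤ G.degree a := by
    intro a
    apply Finset.card_le_card_of_injOn Subtype.val
    · intro w hw
      simp only [Finset.mem_coe, SimpleGraph.mem_neighborFinset] at hw ⊢
      exact hw
    · exact Subtype.val_injective.injOn
  constructor
  · rw [← hcardeq, ← H.sum_degrees_eq_twice_card_edges]
    calc ∑ a : {x // x ∈ S}, H.degree a ≤ ∑ a : {x // x ∈ S}, G.degree a :=
          Finset.sum_le_sum (fun a _ => hdeg a)
      _ = ∑ v ∈ S, G.degree v := Finset.sum_coe_sort S (fun v => G.degree v)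
  · rw [← hcardeq]
    simpa [Fintype.card_coe] using H.card_edgeFinset_le_card_choose_two

theorem degeneracy_le_moment_root {V : Type*} [Fintype V] [DecidableEq V]
    (G : SimpleGraph V) [DecidableRel G.Adj]
    (s : ℕ) (hs : 1 ≤ s)
    (μ : ℝ) (hμ : μ = ∑ v : V, (G.degree v : ℝ) ^ s) :
    ∀ S : Finset V, 2 ≤ S.card →
      ((⌈((G.edgeFinset.filter (fun e => ∀ v ∈ e, v ∈ S)).card : ℚ) /
          ((S.card : ℚ) - 1)⌉ : ℤ) : ℝ) ≤ μ ^ ((1 : ℝ) / ((s : ℝ) + 1)) := by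
  classical
  intro S hS
  obtain ⟨h2E, hchoose⟩ := deg_aux G S
  set E : ℕ := (G.edgeFinset.filter (fun e => ∀ v ∈ e, v ∈ S)).card with hE
  set n : ℕ := S.card with hn
  set k : ℤ := ⌈(E : ℚ) / ((n : ℚ) - 1)⌉ with hk
  have hμ0 : 0 ≤ μ := by rw [hμ]; positivity
  have hrpow0 : (0:ℝ) ≤ μ ^ ((1:ℝ)/((s:ℝ)+1)) := Real.rpow_nonneg hμ0 _
  rcases le_or_gt k 0 with h0 | hkpos
  · exact le_trans (by exact_mod_cast h0) hrpow0
  -- main case: show (k:ℝ)^(s+1) ≤ μ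
  have hn1 : (0:ℚ) < (n:ℚ) - 1 := by
    have : (2:ℚ) ≤ (n:ℚ) := by exact_mod_cast hS
    linarith
  -- E ≥ (k-1)(n-1)+1
  have hceil : ((k:ℚ) - 1) * ((n:ℚ) - 1) < (E:ℚ) := by
    have h1 : (k:ℚ) < (E:ℚ) / ((n:ℚ) - 1) + 1 := Int.ceil_lt_add_one _
    have h2 : ((k:ℚ) - 1) * ((n:ℚ) - 1) < ((E:ℚ) / ((n:ℚ) - 1)) * ((n:ℚ) - 1) := by
      apply mul_lt_mul_of_pos_right (by linarith) hn1
    rwa [div_mul_cancel₀ _ (ne_of_gt hn1)] at h2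
  have hEk : (k - 1) * ((n:ℤ) - 1) + 1 ≤ (E:ℤ) := by
    have : ((k - 1) * ((n:ℤ) - 1) : ℤ) < (E:ℤ) := by exact_mod_cast (by push_cast; linarith [hceil] : (((k - 1) * ((n:ℤ) - 1) : ℤ) : ℚ) < ((E:ℤ):ℚ))
    omega
  -- k ≤ n
  have h2En : 2 * E ≤ n * (n - 1) := by
    have h := hchoose
    rw [Nat.choose_two_right] at h
    have := Nat.div_mul_le_self (n * (n-1)) 2
    omega
  have hkn : k ≤ (n:ℤ) := by
    rw [hk]
    apply Int.ceil_le.mpr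
    rw [div_le_iff₀ hn1]
    have : (2:ℚ) * E ≤ (n:ℚ) * ((n:ℚ) - 1) := by
      have h2 : ((2 * E : ℕ) : ℚ) ≤ ((n * (n-1) : ℕ) : ℚ) := by exact_mod_cast h2En
      push_cast at h2
      have hn2 : (1:ℚ) ≤ (n:ℚ) := by linarith
      rw [Nat.cast_sub (by omega : 1 ≤ n)] at h2
      push_cast at h2
      linarith
    push_cast
    linarith
  -- key power bound
  have hkey : (k:ℝ) ^ (s + 1) ≤ μ := by
    obtain ⟨t, rfl⟩ : ∃ t, s = t + 1 := ⟨s - 1, (Nat.succ_pred_eq_of_pos hs).symm⟩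
    have hsumle : ∑ v ∈ S, (G.degree v : ℝ) ^ (t+1) ≤ μ := by
      rw [hμ]
      exact Finset.sum_le_sum_of_subset_of_nonneg (Finset.subset_univ S)
        (fun v _ _ => by positivity)
    have hpm : (∑ v ∈ S, (G.degree v : ℝ)) ^ (t+1) / (n:ℝ) ^ t ≤
        ∑ v ∈ S, (G.degree v : ℝ) ^ (t+1) := by
      have := pow_sum_div_card_le_sum_pow (s := S) (f := fun v => (G.degree v : ℝ))
        (fun i _ => by positivity) t
      simpa [hn] using this
    have h2Er : (2 * (E:ℝ)) ≤ ∑ v ∈ S, (G.degree v : ℝ) := by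
      have : ((2 * E : ℕ) : ℝ) ≤ ((∑ v ∈ S, G.degree v : ℕ) : ℝ) := by exact_mod_cast h2E
      push_cast at this
      linarith
    have hN2 : (2:ℝ) ≤ (n:ℝ) := by exact_mod_cast hS
    rcases lt_or_ge k 2 with hk1 | hk2
    · -- k = 1
      have hk1' : k = 1 := by omega
      have hE1 : 1 ≤ E := by
        have := hEk
        rw [hk1'] at this
        simp at this
        omega
      have : (1:ℝ) ≤ μ := by
        obtain ⟨e, he⟩ := Finset.card_pos.mp (by omega : 0 < E)
        rw [Finset.mem_filter] at he
        obtain ⟨he1, -⟩ := he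
        rw [SimpleGraph.mem_edgeFinset] at he1
        induction e with
        | _ a b =>
          rw [SimpleGraph.mem_edgeSet] at he1
          have hda : 1 ≤ G.degree a := (SimpleGraph.degree_pos_iff_exists_adj G a).mpr ⟨b, he1⟩
          have h1 : (1:ℝ) ≤ (G.degree a : ℝ) ^ (t+1) :=
            one_le_pow₀ (by exact_mod_cast hda)
          rw [hμ]
          calc (1:ℝ) ≤ (G.degree a : ℝ) ^ (t+1) := h1
            _ ≤ ∑ v : V, (G.degree v : ℝ) ^ (t+1) :=
                Finset.single_le_sum (f := fun v => (G.degree v : ℝ) ^ (t+1))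
                  (fun v _ => by positivity) (Finset.mem_univ a)
      rw [hk1']; simpa using this
    · -- k ≥ 2
      have hK2 : (2:ℝ) ≤ (k:ℝ) := by exact_mod_cast hk2
      have hKN : (k:ℝ) ≤ (n:ℝ) := by exact_mod_cast hkn
      have hEk' : ((k:ℝ) - 1) * ((n:ℝ) - 1) + 1 ≤ (E:ℝ) := by
        have : (((k-1) * ((n:ℤ)-1) + 1 : ℤ) : ℝ) ≤ ((E:ℤ):ℝ) := by exact_mod_cast hEk
        push_cast at this; linarith
      have hkn2E : (k:ℝ) * (n:ℝ) ≤ 2 * (E:ℝ) := by nlinarith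
      have hNpos : (0:ℝ) < (n:ℝ) := by linarith
      have hstep1 : (k:ℝ) ≤ 2 * (E:ℝ) / (n:ℝ) := by
        rw [le_div_iff₀ hNpos]; linarith
      have hstep2 : (k:ℝ) ^ (t+1) ≤ (2 * (E:ℝ) / (n:ℝ)) ^ (t+1) :=
        pow_le_pow_left₀ (by positivity) hstep1 _
      calc (k:ℝ) ^ (t + 1 + 1) = (k:ℝ) ^ (t+1) * (k:ℝ) := by ring
        _ ≤ (2 * (E:ℝ) / (n:ℝ)) ^ (t+1) * (n:ℝ) := by
            apply mul_le_mul hstep2 hKN (by positivity) (by positivity)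
        _ = (2 * (E:ℝ)) ^ (t+1) / (n:ℝ) ^ t := by
            rw [div_pow]; field_simp; ring
        _ ≤ (∑ v ∈ S, (G.degree v : ℝ)) ^ (t+1) / (n:ℝ) ^ t := by
            apply div_le_div_of_nonneg_right ?_ (by positivity)
            exact pow_le_pow_left₀ (by positivity) h2Er _
        _ ≤ ∑ v ∈ S, (G.degree v : ℝ) ^ (t+1) := hpm
        _ ≤ μ := hsumle
  -- conclude
  have hkR : (0:ℝ) ≤ (k:ℝ) := by exact_mod_cast le_of_lt hkpos
  have h1 : ((k:ℝ) ^ (s+1)) ^ ((1:ℝ)/((s:ℝ)+1)) ≤ μ ^ ((1:ℝ)/((s:ℝ)+1)) :=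
    Real.rpow_le_rpow (by positivity) hkey (by positivity)
  have hexp : (((s+1:ℕ)):ℝ) * ((1:ℝ)/((s:ℝ)+1)) = 1 := by
    push_cast
    field_simp
  calc ((k:ℝ)) = ((k:ℝ) ^ (s+1)) ^ ((1:ℝ)/((s:ℝ)+1)) := by
        rw [← Real.rpow_natCast (k:ℝ) (s+1), ← Real.rpow_mul hkR, hexp, Real.rpow_one]
    _ ≤ μ ^ ((1:ℝ)/((s:ℝ)+1)) := h1
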